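/- arXiv:0906.4706 — 10 statements merged into one kernel-verified Lean document; each statement's English description precedes it below -/
import Mathlib

section
/- For a finite set S of size n, a function φ: 2^S → ℝ, and 0 ≤ r < n, define V(R) = {s ∈ S\R : φ(R ∪ {s}) ≠ φ(R)} and X(R) = {s ∈ R : φ(R\{s}) ≠ φ(R)}. Let v_r (resp. x_r) be the expected size of V(R) (resp. X(R)) over a uniformly random r-element subset R of S. Then v_r/(n-r) = x_{r+1}/(r+1). -/
open Finset

/-- **Sampling Lemma.** For a finite set `S` of size `n`, a function `φ : 2^S → ℝ`,
and `0 ≤ r < n`, with violators `V(R) = {s ∉ R : φ(R ∪ {s}) ≠ φ(R)}` and extreme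
elements `X(R) = {s ∈ R : φ(R \ {s}) ≠ φ(R)}`, the expectations over a uniformly
random `r`-subset (resp. `(r+1)`-subset) satisfy `v_r/(n-r) = x_{r+1}/(r+1)`. -/
theorem sampling_lemma {α : Type*} [Fintype α] [DecidableEq α]
    (φ : Finset α → ℝ) (n r : ℕ) (hn : Fintype.card α = n) (hr : r < n)
    (viol ext : Finset α → Finset α)
    (hviol : ∀ R : Finset α,
      viol R = univ.filter (fun s => s ∉ R ∧ φ (insert s R) ≠ φ R))
    (hext : ∀ R : Finset α,
      ext R = R.filter (fun s => φ (R.erase s) ≠ φ R)) :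
    ((∑ R ∈ univ.powersetCard r, ((viol R).card : ℝ)) / (n.choose r)) / ((n : ℝ) - r)
      = ((∑ R ∈ univ.powersetCard (r + 1), ((ext R).card : ℝ)) / (n.choose (r + 1)))
          / ((r : ℝ) + 1) := by
  have key : ∑ R ∈ univ.powersetCard r, (viol R).card
      = ∑ R ∈ univ.powersetCard (r + 1), (ext R).card := by
    rw [← Finset.card_sigma, ← Finset.card_sigma]
    refine Finset.card_bij' (fun p _ => ⟨insert p.2 p.1, p.2⟩)
      (fun p _ => ⟨p.1.erase p.2, p.2⟩) ?_ ?_ ?_ ?_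
    · rintro ⟨R, s⟩ hp
      simp only [Finset.mem_sigma, Finset.mem_powersetCard_univ, hviol, hext,
        Finset.mem_filter, Finset.mem_univ, true_and] at hp ⊢
      obtain ⟨hcard, hs, hne⟩ := hp
      have herase : (insert s R).erase s = R := Finset.erase_insert hs
      refine ⟨by rw [Finset.card_insert_of_notMem hs, hcard], Finset.mem_insert_self _ _, ?_⟩
      rw [herase]; exact fun h => hne h.symm
    · rintro ⟨Q, s⟩ hp
      simp only [Finset.mem_sigma, Finset.mem_powersetCard_univ, hviol, hext,
        Finset.mem_filter, Finset.mem_univ, true_and] at hp ⊢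
      obtain ⟨hcard, hs, hne⟩ := hp
      have hins : insert s (Q.erase s) = Q := Finset.insert_erase hs
      refine ⟨by rw [Finset.card_erase_of_mem hs, hcard]; rfl,
        Finset.notMem_erase _ _, ?_⟩
      rw [hins]; exact fun h => hne h.symm
    · rintro ⟨R, s⟩ hp
      simp only [Finset.mem_sigma, Finset.mem_powersetCard_univ, hviol,
        Finset.mem_filter, Finset.mem_univ, true_and] at hp
      simp [Finset.erase_insert hp.2.1]
    · rintro ⟨Q, s⟩ hp
      simp only [Finset.mem_sigma, Finset.mem_powersetCard_univ, hext,
        Finset.mem_filter] at hp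
      simp [Finset.insert_erase hp.2.1]
  have keyR : (∑ R ∈ univ.powersetCard r, ((viol R).card : ℝ))
      = ∑ R ∈ univ.powersetCard (r + 1), ((ext R).card : ℝ) := by
    exact_mod_cast congrArg Nat.cast key
  rw [keyR]
  have hc1 : (0 : ℝ) < n.choose r := by exact_mod_cast Nat.choose_pos hr.le
  have hc2 : (0 : ℝ) < n.choose (r + 1) := by exact_mod_cast Nat.choose_pos hr
  have hnr : (0 : ℝ) < (n : ℝ) - r := by
    have : (r : ℝ) < n := by exact_mod_cast hr
    linarith
  have hid : (n.choose (r + 1) : ℝ) * (r + 1) = (n.choose r : ℝ) * ((n : ℝ) - r) := by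
    have := Nat.choose_succ_right_eq n r
    have h2 : ((n.choose (r + 1) * (r + 1) : ℕ) : ℝ) = ((n.choose r * (n - r) : ℕ) : ℝ) := by
      exact_mod_cast congrArg Nat.cast this
    push_cast [Nat.cast_sub hr.le] at h2
    linarith
  rw [div_div, div_div]
  congr 1
  linarith [hid]
end

section
/- Every violator space (H, V) satisfies monotonicity: for all F ⊆ E ⊆ G ⊆ H, if V(F) = V(G) then V(E) = V(F) = V(G). -/
open Finset

/-- A violator space: a finite set `H` together with a violator mapping `V : 2^H → 2^H`
satisfying consistency and locality. -/
structure ViolatorSpace (H : Type*) [Fintype H] [DecidableEq H] where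
  V : Finset H → Finset H
  consistency : ∀ G : Finset H, Disjoint G (V G)
  locality : ∀ F G : Finset H, F ⊆ G → Disjoint G (V F) → V G = V F

/-- **Monotonicity.** Every violator space satisfies: for `F ⊆ E ⊆ G`,
if `V(F) = V(G)` then `V(E) = V(F) = V(G)`. -/
theorem violatorSpace_monotonicity {H : Type*} [Fintype H] [DecidableEq H]
    (VS : ViolatorSpace H) (F E G : Finset H) (hFE : F ⊆ E) (hEG : E ⊆ G)
    (h : VS.V F = VS.V G) :
    VS.V E = VS.V F ∧ VS.V E = VS.V G := by
  have hd : Disjoint E (VS.V F) := by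
    rw [h]; exact (VS.consistency G).mono_left hEG
  have := VS.locality F E hFE hd
  exact ⟨this, this.trans h⟩
end

section
/- Let (H, V) be a violator space of combinatorial dimension d with |H| = n. If R ⊆ H is chosen uniformly at random among r-element subsets (r ≤ n), then the expected number of violators satisfies E[|V(R)|] ≤ d·(n-r)/(r+1). -/
open Finset

/-- `B` is a basis of `G` for the mapping `W`: a minimal subset of `G` with the
same violators as `G`. -/
def IsBasisOf {H : Type*} [Fintype H] [DecidableEq H]
    (W : Finset H → Finset H) (B G : Finset H) : Prop :=
  B ⊆ G ∧ W B = W G ∧ ∀ B' : Finset H, B' ⊂ B → W B' ≠ W G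

section Aux

variable {H : Type*} [Fintype H] [DecidableEq H] (VS : ViolatorSpace H)

lemma exists_basis (G : Finset H) : ∃ B, IsBasisOf VS.V B G := by
  classical
  have hne : (G.powerset.filter (fun B => VS.V B = VS.V G)).Nonempty := ⟨G, by simp⟩
  obtain ⟨B, hB, hmin⟩ := Finset.exists_min_image _ Finset.card hne
  simp only [mem_filter, mem_powerset] at hB
  refine ⟨B, hB.1, hB.2, fun B' hB' hV => ?_⟩
  have h1 : B.card ≤ B'.card :=
    hmin B' (by simp [mem_filter, mem_powerset, hV, hB'.subset.trans hB.1])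
  exact absurd h1 (not_le.2 (card_lt_card hB'))

/-- extreme elements -/
noncomputable def extSet (Q : Finset H) : Finset H :=
  Q.filter (fun s => VS.V (Q.erase s) ≠ VS.V Q)

lemma extSet_card_le {d : ℕ} (hd : ∀ G B : Finset H, IsBasisOf VS.V B G → B.card ≤ d)
    (Q : Finset H) : (extSet VS Q).card ≤ d := by
  obtain ⟨B, hB⟩ := exists_basis VS Q
  obtain ⟨hBsub, hBV, -⟩ := id hB
  have hsub : extSet VS Q ⊆ B := by
    intro s hs
    simp only [extSet, mem_filter] at hs
    by_contra hsB
    have hBsub' : B ⊆ Q.erase s := subset_erase.2 ⟨hBsub, hsB⟩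
    have hdisj : Disjoint (Q.erase s) (VS.V B) := by
      rw [hBV]
      exact (VS.consistency Q).mono_left (erase_subset _ _)
    exact hs.2 ((VS.locality B (Q.erase s) hBsub' hdisj).trans hBV)
  exact le_trans (card_le_card hsub) (hd Q B hB)

lemma mem_V_iff {s : H} {R : Finset H} (hs : s ∉ R) :
    s ∈ VS.V R ↔ VS.V (insert s R) ≠ VS.V R := by
  constructor
  · intro h heq
    have := VS.consistency (insert s R)
    rw [heq] at this
    exact (Finset.disjoint_left.1 this (mem_insert_self s R)) h
  · intro h
    by_contra hsv
    exact h (VS.locality R (insert s R) (subset_insert s R)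
      (Finset.disjoint_insert_left.2 ⟨hsv, VS.consistency R⟩))

end Aux

/-- Let `(H, V)` be a violator space of combinatorial dimension (at most) `d`
with `|H| = n`. For a uniformly random `r`-element subset `R ⊆ H` (`r ≤ n`), the
expected number of violators satisfies `E[|V(R)|] ≤ d (n - r)/(r + 1)`. -/
theorem expected_violators_bound {H : Type*} [Fintype H] [DecidableEq H]
    (VS : ViolatorSpace H) (d n r : ℕ) (hn : Fintype.card H = n) (hr : r ≤ n)
    (hd : ∀ G B : Finset H, IsBasisOf VS.V B G → B.card ≤ d) :
    (∑ R ∈ univ.powersetCard r, ((VS.V R).card : ℝ)) / (n.choose r)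
      ≤ (d : ℝ) * ((n : ℝ) - r) / ((r : ℝ) + 1) := by
  classical
  -- double counting
  have key : ∑ R ∈ univ.powersetCard r, (VS.V R).card
      = ∑ Q ∈ univ.powersetCard (r + 1), (extSet VS Q).card := by
    rw [← Finset.card_sigma, ← Finset.card_sigma]
    apply Finset.card_bij' (fun p _ => (⟨insert p.2 p.1, p.2⟩ : Σ _ : Finset H, H))
      (fun p _ => (⟨p.1.erase p.2, p.2⟩ : Σ _ : Finset H, H))
    · rintro ⟨R, s⟩ hp
      simp only [Finset.mem_sigma, mem_powersetCard_univ] at hp ⊢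
      have hsR : s ∉ R := Finset.disjoint_right.1 (VS.consistency R) hp.2
      refine ⟨by rw [card_insert_of_notMem hsR, hp.1], ?_⟩
      simp only [extSet, mem_filter, mem_insert_self, true_and,
        Finset.erase_insert hsR]
      exact ((mem_V_iff VS hsR).1 hp.2).symm
    · rintro ⟨Q, s⟩ hp
      simp only [Finset.mem_sigma, mem_powersetCard_univ, extSet, mem_filter] at hp ⊢
      obtain ⟨hQ, hsQ, hne⟩ := hp
      refine ⟨by rw [card_erase_of_mem hsQ, hQ]; rfl, ?_⟩
      have hsR : s ∉ Q.erase s := notMem_erase s Q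
      rw [mem_V_iff VS hsR, Finset.insert_erase hsQ]
      exact fun h => hne h.symm
    · rintro ⟨R, s⟩ hp
      simp only [Finset.mem_sigma, mem_powersetCard_univ] at hp
      have hsR : s ∉ R := Finset.disjoint_right.1 (VS.consistency R) hp.2
      simp [Finset.erase_insert hsR]
    · rintro ⟨Q, s⟩ hp
      simp only [Finset.mem_sigma, mem_powersetCard_univ, extSet, mem_filter] at hp
      simp [Finset.insert_erase hp.2.1]
  have hbound : ∑ R ∈ univ.powersetCard r, (VS.V R).card ≤ d * n.choose (r + 1) := by
    rw [key]
    calc ∑ Q ∈ univ.powersetCard (r + 1), (extSet VS Q).card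
        ≤ ∑ _Q ∈ univ.powersetCard (r + 1), d :=
          Finset.sum_le_sum fun Q _ => extSet_card_le VS hd Q
      _ = (univ.powersetCard (r + 1)).card * d := by rw [Finset.sum_const, smul_eq_mul]
      _ = d * n.choose (r + 1) := by
          rw [Finset.card_powersetCard, card_univ, hn, mul_comm]
  -- real arithmetic
  have hC : (0 : ℝ) < n.choose r := by exact_mod_cast Nat.choose_pos hr
  have hr1 : (0 : ℝ) < (r : ℝ) + 1 := by positivity
  rw [div_le_div_iff₀ hC hr1]
  have hid : n.choose (r + 1) * (r + 1) = n.choose r * (n - r) := Nat.choose_succ_right_eq n r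
  have hS : (∑ R ∈ univ.powersetCard r, ((VS.V R).card : ℝ))
      = ((∑ R ∈ univ.powersetCard r, (VS.V R).card : ℕ) : ℝ) := by push_cast; ring
  rw [hS]
  have h1 : ((∑ R ∈ univ.powersetCard r, (VS.V R).card : ℕ) : ℝ) * ((r : ℝ) + 1)
      ≤ ((d * n.choose (r + 1) : ℕ) : ℝ) * ((r : ℝ) + 1) := by
    apply mul_le_mul_of_nonneg_right _ (le_of_lt hr1)
    exact_mod_cast hbound
  refine h1.trans (le_of_eq ?_)
  have : ((d * (n.choose (r + 1) * (r + 1)) : ℕ) : ℝ)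
      = ((d * (n.choose r * (n - r)) : ℕ) : ℝ) := by rw [hid]
  push_cast [Nat.cast_sub hr] at this
  push_cast
  linarith [this]
end

section
/- In a violator space, every extreme element of R belongs to every basis of R; consequently |X(R)| ≤ dim(H,V) for all R ⊆ H. -/
open Finset

/-- In a violator space, every extreme element of `R` (an `s ∈ R` with
`V(R \ {s}) ≠ V(R)`) belongs to every basis of `R`; consequently
`|X(R)| ≤ dim(H, V)` (where `d` bounds the size of every basis). -/
theorem extreme_in_every_basis {H : Type*} [Fintype H] [DecidableEq H]
    (VS : ViolatorSpace H) (d : ℕ)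
    (hd : ∀ G B : Finset H, IsBasisOf VS.V B G → B.card ≤ d) :
    (∀ R B : Finset H, IsBasisOf VS.V B R →
      ∀ s ∈ R, VS.V (R.erase s) ≠ VS.V R → s ∈ B) ∧
    (∀ R : Finset H,
      (R.filter (fun s => VS.V (R.erase s) ≠ VS.V R)).card ≤ d) := by
  have key : ∀ R B : Finset H, IsBasisOf VS.V B R →
      ∀ s ∈ R, VS.V (R.erase s) ≠ VS.V R → s ∈ B := by
    intro R B hB s hs hne
    by_contra hsB
    have hBsub : B ⊆ R.erase s := fun x hx =>
      Finset.mem_erase.mpr ⟨fun h => hsB (h ▸ hx), hB.1 hx⟩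
    have hdis : Disjoint (R.erase s) (VS.V B) := by
      have h1 : Disjoint R (VS.V R) := VS.consistency R
      rw [hB.2.1]
      exact Disjoint.mono_left (Finset.erase_subset s R) h1
    have := VS.locality B (R.erase s) hBsub hdis
    exact hne (this.trans hB.2.1)
  have exB : ∀ R : Finset H, ∃ B, IsBasisOf VS.V B R := by
    intro R
    obtain ⟨B, ⟨hBR, hBV⟩, hmin⟩ :=
      (wellFounded_lt (α := Finset H)).has_min
        {B | B ⊆ R ∧ VS.V B = VS.V R} ⟨R, subset_rfl, rfl⟩
    exact ⟨B, hBR, hBV, fun B' hB' hV' =>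
      hmin B' ⟨hB'.subset.trans hBR, hV'⟩ hB'⟩
  refine ⟨key, fun R => ?_⟩
  obtain ⟨B, hB⟩ := exB R
  refine le_trans (Finset.card_le_card fun s hs => ?_) (hd R B hB)
  obtain ⟨hsR, hne⟩ := Finset.mem_filter.mp hs
  exact key R B hB s hsR hne
end

section
/- Let (H, V) be a violator space, F ⊆ G ⊆ H, and G ∩ V(F) ≠ ∅. Then G ∩ V(F) contains at least one element from every basis of G. -/
open Finset

/-- Let `(H, V)` be a violator space, `F ⊆ G ⊆ H`, and `G ∩ V(F) ≠ ∅`.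
Then `G ∩ V(F)` contains at least one element from every basis of `G`. -/
theorem violators_meet_every_basis {H : Type*} [Fintype H] [DecidableEq H]
    (VS : ViolatorSpace H) (F G : Finset H) (hFG : F ⊆ G)
    (hne : (G ∩ VS.V F).Nonempty) :
    ∀ B : Finset H, IsBasisOf VS.V B G → (B ∩ (G ∩ VS.V F)).Nonempty := by
  intro B hB
  by_contra hempty
  rw [Finset.not_nonempty_iff_eq_empty] at hempty
  obtain ⟨hBG, hVB, _⟩ := hB
  -- B is disjoint from V F
  have hBdisj : Disjoint B (VS.V F) := by
    rw [Finset.disjoint_left]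
    intro a haB haV
    have : a ∈ B ∩ (G ∩ VS.V F) := by
      simp [Finset.mem_inter, haB, hBG haB, haV]
    simp [hempty] at this
  have hFB : F ∪ B ⊆ G := Finset.union_subset hFG hBG
  -- V (F ∪ B) = V B
  have h1 : VS.V (F ∪ B) = VS.V B := by
    apply VS.locality
    · exact Finset.subset_union_right
    · have : Disjoint G (VS.V B) := by rw [hVB]; exact VS.consistency G
      exact this.mono_left hFB
  -- V (F ∪ B) = V F
  have h2 : VS.V (F ∪ B) = VS.V F := by
    apply VS.locality
    · exact Finset.subset_union_left
    · exact Finset.disjoint_union_left.mpr ⟨VS.consistency F, hBdisj⟩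
  have hVF : VS.V F = VS.V G := by rw [← h2, h1, hVB]
  obtain ⟨x, hx⟩ := hne
  rw [Finset.mem_inter, hVF] at hx
  exact (Finset.disjoint_left.mp (VS.consistency G)) hx.1 hx.2
end

section
/- Consider the German Algorithm on a violator space (H, V): starting from G^(0) = R, in round i compute a basis B^(i) of G^(i-1), set V^(i) = V(G^(i-1)) = V(B^(i)), and G^(i) = G^(i-1) ∪ V^(i); the algorithm stops when V^(ℓ+1) = ∅. Then for all j < i ≤ ℓ (rounds with nonempty violator sets), B^(i) ∩ V^(j) ≠ ∅. -/
open Finset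

/-- The working sets of the German Algorithm started from `R`:
`G⁽⁰⁾ = R` and `G⁽ⁱ⁺¹⁾ = G⁽ⁱ⁾ ∪ V(G⁽ⁱ⁾)`.  (Round `i ≥ 1` of the algorithm
computes a basis of `G⁽ⁱ⁻¹⁾`, whose violator set is `V⁽ⁱ⁾ = V(G⁽ⁱ⁻¹⁾)`;
once the violator set is empty the sequence stabilizes, matching the
convention that sets of later rounds equal those of the final round.) -/
def Gseq {H : Type*} [Fintype H] [DecidableEq H]
    (VS : ViolatorSpace H) (R : Finset H) : ℕ → Finset H
  | 0 => R
  | (i + 1) => Gseq VS R i ∪ VS.V (Gseq VS R i)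

/-- **Lemma 3.** In the German Algorithm, if `B⁽ⁱ⁾` is a basis of `G⁽ⁱ⁻¹⁾` for
each round `i ≥ 1`, and rounds `1, …, ℓ` are controversial (`V⁽ⁱ⁾ ≠ ∅`), then
for all `j < i ≤ ℓ` we have `B⁽ⁱ⁾ ∩ V⁽ʲ⁾ ≠ ∅`. -/
theorem german_basis_meets_earlier_violators {H : Type*} [Fintype H] [DecidableEq H]
    (VS : ViolatorSpace H) (R : Finset H) (Bs : ℕ → Finset H) (ℓ : ℕ)
    (hB : ∀ i : ℕ, 1 ≤ i → IsBasisOf VS.V (Bs i) (Gseq VS R (i - 1)))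
    (hc : ∀ i : ℕ, 1 ≤ i → i ≤ ℓ → VS.V (Gseq VS R (i - 1)) ≠ ∅) :
    ∀ j i : ℕ, 1 ≤ j → j < i → i ≤ ℓ →
      (Bs i ∩ VS.V (Gseq VS R (j - 1))).Nonempty := by
  have hmono : ∀ a b : ℕ, a ≤ b → Gseq VS R a ⊆ Gseq VS R b := by
    intro a b hab
    induction b with
    | zero => simp [Nat.le_zero.mp hab]
    | succ n ih =>
      rcases Nat.lt_or_ge a (n + 1) with h | h
      · exact (ih (Nat.lt_succ_iff.mp h)).trans (by simp [Gseq])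
      · have : a = n + 1 := le_antisymm hab h
        simp [this]
  intro j i hj hji hiℓ
  by_contra hne
  rw [Finset.not_nonempty_iff_eq_empty, ← Finset.disjoint_iff_inter_eq_empty] at hne
  obtain ⟨hBsub, hBV, -⟩ := hB i (by omega)
  set Gj := Gseq VS R (j - 1) with hGj
  set Gi := Gseq VS R (i - 1) with hGi
  set C := Bs i ∪ Gj with hC
  have hGjGi : Gj ⊆ Gi := hmono _ _ (by omega)
  have hCGi : C ⊆ Gi := Finset.union_subset hBsub hGjGi
  have h1 : VS.V C = VS.V Gj :=
    VS.locality Gj C Finset.subset_union_right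
      (Finset.disjoint_union_left.mpr ⟨hne, VS.consistency Gj⟩)
  have h2 : VS.V C = VS.V (Bs i) := by
    refine VS.locality (Bs i) C Finset.subset_union_left ?_
    rw [hBV]
    exact Finset.disjoint_of_subset_left hCGi (VS.consistency Gi)
  -- V(Gj) = V(Gi)
  have h3 : VS.V Gj = VS.V Gi := by rw [← h1, h2, hBV]
  -- but V(Gj) ⊆ Gseq j ⊆ Gi, contradicting consistency of Gi
  have hVsub : VS.V Gj ⊆ Gi := by
    have h' : VS.V Gj ⊆ Gseq VS R ((j - 1) + 1) := by
      simp only [Gseq]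
      exact Finset.subset_union_right
    exact h'.trans (hmono _ _ (by omega))
  have hdis : Disjoint Gi (VS.V Gi) := VS.consistency Gi
  rw [← h3] at hdis
  exact hc j (by omega) (by omega)
    (disjoint_self.mp (hdis.mono_left hVsub))
end

section
/- Let (H, V) be a violator space. For R ⊆ H define Γ(R) = (V_R^(1), ..., V_R^(d)), the sequence of violator sets in the first d rounds of the German Algorithm started from R, and V'(R) = {h ∈ H\R : Γ(R) ≠ Γ(R ∪ {h})}. Then (H, V') satisfies consistency and locality, i.e., it is a violator space. -/
open Finset

/-- The derived violator mapping of the German Algorithm: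
`V'(R) = {h ∈ H \ R : Γ(R) ≠ Γ(R ∪ {h})}`, where
`Γ(R) = (V_R⁽¹⁾, …, V_R⁽ᵈ⁾)` is the tuple of violator sets of the first `d`
rounds of the German Algorithm started from `R` (here `V_R⁽ⁱ⁺¹⁾ = V(G_R⁽ⁱ⁾)`). -/
def Vprime {H : Type*} [Fintype H] [DecidableEq H]
    (VS : ViolatorSpace H) (d : ℕ) (R : Finset H) : Finset H :=
  univ.filter (fun h => h ∉ R ∧
    ∃ i ∈ Finset.range d,
      VS.V (Gseq VS R i) ≠ VS.V (Gseq VS (insert h R) i))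

section GermanAux

variable {H : Type*} [Fintype H] [DecidableEq H] (VS : ViolatorSpace H)

lemma V_insert_eq (G : Finset H) (h : H) (hh : h ∉ VS.V G) :
    VS.V (insert h G) = VS.V G := by
  apply VS.locality G (insert h G) (Finset.subset_insert _ _)
  rw [Finset.insert_eq, Finset.disjoint_union_left]
  exact ⟨by simpa using hh, VS.consistency G⟩

lemma subset_Gseq (R : Finset H) (i : ℕ) : R ⊆ Gseq VS R i := by
  induction i with
  | zero => exact subset_rfl
  | succ i ih => exact ih.trans Finset.subset_union_left

lemma mem_Gseq (R : Finset H) (n : ℕ) (h : H) :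
    h ∈ Gseq VS R n ↔ h ∈ R ∨ ∃ i < n, h ∈ VS.V (Gseq VS R i) := by
  induction n with
  | zero => simp [Gseq]
  | succ n ih =>
    show h ∈ Gseq VS R n ∪ VS.V (Gseq VS R n) ↔ _
    simp only [Finset.mem_union, ih]
    constructor
    · rintro ((hR | ⟨i, hi, hv⟩) | hv)
      · exact Or.inl hR
      · exact Or.inr ⟨i, Nat.lt_succ_of_lt hi, hv⟩
      · exact Or.inr ⟨n, Nat.lt_succ_self n, hv⟩
    · rintro (hR | ⟨i, hi, hv⟩)
      · exact Or.inl (Or.inl hR)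
      · rcases Nat.lt_succ_iff_lt_or_eq.mp hi with hi | rfl
        · exact Or.inl (Or.inr ⟨i, hi, hv⟩)
        · exact Or.inr hv

lemma Gseq_insert (R : Finset H) (h : H) (i : ℕ)
    (hq : ∀ j < i, h ∉ VS.V (Gseq VS R j)) :
    Gseq VS (insert h R) i = insert h (Gseq VS R i) := by
  induction i with
  | zero => rfl
  | succ i ih =>
    have ih' := ih (fun j hj => hq j (Nat.lt_succ_of_lt hj))
    have hv : VS.V (insert h (Gseq VS R i)) = VS.V (Gseq VS R i) :=
      V_insert_eq VS _ h (hq i (Nat.lt_succ_self i))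
    show Gseq VS (insert h R) i ∪ VS.V (Gseq VS (insert h R) i) = _
    rw [ih', hv, Finset.insert_union]
    rfl

lemma Vprime_eq (d : ℕ) (R : Finset H) :
    Vprime VS d R = Gseq VS R d \ R := by
  ext h
  simp only [Vprime, Finset.mem_filter, Finset.mem_univ, true_and, Finset.mem_sdiff,
    mem_Gseq, Finset.mem_range]
  constructor
  · rintro ⟨hR, i, hi, hne⟩
    refine ⟨Or.inr ?_, hR⟩
    by_contra hall
    push_neg at hall
    have hG : Gseq VS (insert h R) i = insert h (Gseq VS R i) :=
      Gseq_insert VS R h i (fun j hj => hall j (hj.trans hi))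
    rw [hG, V_insert_eq VS _ h (hall i hi)] at hne
    exact hne rfl
  · rintro ⟨hmem, hR⟩
    rcases hmem with hmem | hmem
    · exact absurd hmem hR
    refine ⟨hR, ?_⟩
    have hex : ∃ i, h ∈ VS.V (Gseq VS R i) := ⟨hmem.choose, hmem.choose_spec.2⟩
    set i₀ := Nat.find hex with hi₀
    have hi₀d : i₀ < d := lt_of_le_of_lt (Nat.find_min' hex hmem.choose_spec.2)
      hmem.choose_spec.1
    have hG : Gseq VS (insert h R) i₀ = insert h (Gseq VS R i₀) :=
      Gseq_insert VS R h i₀ (fun j hj => Nat.find_min hex hj)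
    refine ⟨i₀, hi₀d, ?_⟩
    intro heq
    have hhv : h ∈ VS.V (Gseq VS (insert h R) i₀) := by
      rw [← heq]; exact Nat.find_spec hex
    have hhG : h ∈ Gseq VS (insert h R) i₀ := by
      rw [hG]; exact Finset.mem_insert_self _ _
    exact (Finset.disjoint_left.mp (VS.consistency _) hhG) hhv

lemma Gseq_union (d : ℕ) (R Q : Finset H) (hRQ : R ⊆ Q)
    (hQ : ∀ x ∈ Q, x ∈ Gseq VS R d → x ∈ R) :
    ∀ i, i ≤ d → Gseq VS Q i = Q ∪ Gseq VS R i := by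
  intro i
  induction i with
  | zero =>
    intro _
    show Q = Q ∪ R
    rw [Finset.union_eq_left.mpr hRQ]
  | succ i ih =>
    intro hid
    have ih' := ih (Nat.le_of_succ_le hid)
    have hVsub : VS.V (Gseq VS R i) ⊆ Gseq VS R d := by
      intro x hx
      rw [mem_Gseq]
      exact Or.inr ⟨i, hid, hx⟩
    have hdisj : Disjoint (Q ∪ Gseq VS R i) (VS.V (Gseq VS R i)) := by
      rw [Finset.disjoint_union_left]
      refine ⟨?_, VS.consistency _⟩
      rw [Finset.disjoint_left]
      intro x hxQ hxV
      have hxR : x ∈ Gseq VS R i := subset_Gseq VS R i (hQ x hxQ (hVsub hxV))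
      exact (Finset.disjoint_left.mp (VS.consistency _) hxR) hxV
    have hV : VS.V (Q ∪ Gseq VS R i) = VS.V (Gseq VS R i) :=
      VS.locality _ _ Finset.subset_union_right hdisj
    show Gseq VS Q i ∪ VS.V (Gseq VS Q i) = Q ∪ (Gseq VS R i ∪ VS.V (Gseq VS R i))
    rw [ih', hV, Finset.union_assoc]

end GermanAux

/-- **Lemma 4 (i), first part.** If `(H, V)` has combinatorial dimension `d`, the
derived pair `(H, V')` satisfies consistency and locality, i.e. it is a violator
space. -/
theorem Vprime_is_violator_space {H : Type*} [Fintype H] [DecidableEq H]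
    (VS : ViolatorSpace H) (d : ℕ)
    (hd : ∀ G B : Finset H, IsBasisOf VS.V B G → B.card ≤ d) :
    (∀ R : Finset H, Disjoint R (Vprime VS d R)) ∧
    (∀ R Q : Finset H, R ⊆ Q → Disjoint Q (Vprime VS d R) →
      Vprime VS d Q = Vprime VS d R) := by
  constructor
  · intro R
    rw [Vprime_eq]
    exact Finset.disjoint_sdiff
  · intro R Q hRQ hdisj
    rw [Vprime_eq] at hdisj ⊢
    rw [Vprime_eq]
    have hQ : ∀ x ∈ Q, x ∈ Gseq VS R d → x ∈ R := by
      intro x hxQ hxG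
      by_contra hxR
      exact (Finset.disjoint_left.mp hdisj hxQ) (Finset.mem_sdiff.mpr ⟨hxG, hxR⟩)
    rw [Gseq_union VS d R Q hRQ hQ d le_rfl]
    ext x
    simp only [Finset.mem_sdiff, Finset.mem_union]
    constructor
    · rintro ⟨hxQ | hxG, hxnQ⟩
      · exact absurd hxQ hxnQ
      · exact ⟨hxG, fun hxR => hxnQ (hRQ hxR)⟩
    · rintro ⟨hxG, hxR⟩
      exact ⟨Or.inr hxG, fun hxQ => hxR (hQ x hxQ hxG)⟩
end

section
/- The derived violator space (H, V') from the German Algorithm has combinatorial dimension at most binomial(d+1, 2), where d is the combinatorial dimension of (H, V). -/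
open Finset

section Aux

variable {H : Type*} [Fintype H] [DecidableEq H] (VS : ViolatorSpace H)

/-- Sandwich lemma: a set between two sets with equal violators has the same violators. -/
lemma VS_sandwich {F E G : Finset H} (hFE : F ⊆ E) (hEG : E ⊆ G)
    (h : VS.V F = VS.V G) : VS.V E = VS.V G := by
  rw [← h]
  exact VS.locality F E hFE (by rw [h]; exact Disjoint.mono_left hEG (VS.consistency G))

/-- A choice of basis for every set. -/
noncomputable def bOf (G : Finset H) : Finset H := (exists_basis VS G).choose

lemma bOf_basis (G : Finset H) : IsBasisOf VS.V (bOf VS G) G :=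
  (exists_basis VS G).choose_spec

lemma gseq_eq (S : Finset H) (i : ℕ) :
    Gseq VS S i = S ∪ (range i).biUnion (fun j => VS.V (Gseq VS S j)) := by
  induction i with
  | zero => simp [Gseq]
  | succ i ih =>
    have h1 : Gseq VS S (i+1) = Gseq VS S i ∪ VS.V (Gseq VS S i) := rfl
    rw [h1, range_add_one, biUnion_insert, ih]
    ext x; simp only [mem_union]; tauto

lemma subset_gseq (S : Finset H) (i : ℕ) : S ⊆ Gseq VS S i := by
  rw [gseq_eq]; exact subset_union_left

lemma v_gseq_subset (S : Finset H) {j i : ℕ} (h : j < i) :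
    VS.V (Gseq VS S j) ⊆ Gseq VS S i := by
  rw [gseq_eq VS S i]
  intro x hx
  exact mem_union_right _ (mem_biUnion.mpr ⟨j, mem_range.mpr h, hx⟩)

lemma gseq_mono (S : Finset H) {i j : ℕ} (h : i ≤ j) : Gseq VS S i ⊆ Gseq VS S j := by
  rw [gseq_eq VS S i, gseq_eq VS S j]
  exact union_subset_union (Subset.refl _)
    (biUnion_subset_biUnion_of_subset_left _ (range_subset_range.mpr h))

lemma v_gseq_disjoint (S : Finset H) {j j' : ℕ} (h : j < j') :
    Disjoint (VS.V (Gseq VS S j)) (VS.V (Gseq VS S j')) :=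
  Disjoint.mono_left (v_gseq_subset VS S h) (VS.consistency (Gseq VS S j'))

lemma gseq_stab (S : Finset H) {k : ℕ} (hk : VS.V (Gseq VS S k) = ∅) :
    ∀ i, k ≤ i → Gseq VS S i = Gseq VS S k := by
  intro i hi
  induction i with
  | zero => cases Nat.le_zero.mp hi; rfl
  | succ i ih =>
    rcases Nat.lt_or_ge i k with h | h
    · have : k = i + 1 := by omega
      rw [← this]
    · have h2 : Gseq VS S i = Gseq VS S k := ih h
      have h1 : Gseq VS S (i+1) = Gseq VS S i ∪ VS.V (Gseq VS S i) := rfl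
      rw [h1, h2, hk, union_empty]

/-- If a basis of `G⁽ⁱ⁾` misses a nonempty `V(G⁽ʲ⁾)` (`j < i`), we get a contradiction. -/
lemma basis_meets (S : Finset H) {i j : ℕ} (hj : j < i)
    (hne : VS.V (Gseq VS S j) ≠ ∅) :
    ∃ x, x ∈ bOf VS (Gseq VS S i) ∧ x ∈ VS.V (Gseq VS S j) := by
  by_contra hcon
  push_neg at hcon
  have hbasis := bOf_basis VS (Gseq VS S i)
  have hdisj : Disjoint (Gseq VS S j ∪ bOf VS (Gseq VS S i)) (VS.V (Gseq VS S j)) := by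
    refine disjoint_union_left.mpr ⟨VS.consistency _, ?_⟩
    rw [disjoint_left]
    exact hcon
  have h1 : VS.V (Gseq VS S j ∪ bOf VS (Gseq VS S i)) = VS.V (Gseq VS S j) :=
    VS.locality _ _ subset_union_left hdisj
  have h2 : VS.V (Gseq VS S j ∪ bOf VS (Gseq VS S i)) = VS.V (Gseq VS S i) :=
    VS_sandwich VS subset_union_right
      (union_subset (gseq_mono VS S hj.le) hbasis.1) hbasis.2.1
  have h3 : VS.V (Gseq VS S j) = VS.V (Gseq VS S i) := h1.symm.trans h2
  apply hne
  rw [eq_empty_iff_forall_notMem]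
  intro x hx
  have hxi : x ∈ Gseq VS S i := v_gseq_subset VS S hj hx
  have hxv : x ∈ VS.V (Gseq VS S i) := h3 ▸ hx
  exact (disjoint_left.mp (VS.consistency (Gseq VS S i)) hxi) hxv

/-- Cardinality: a basis of `G⁽ⁱ⁾` has at most `d - i` elements in `S`,
provided the first `i` violator sets are nonempty. -/
lemma card_inter_le (d : ℕ) (hd : ∀ G B : Finset H, IsBasisOf VS.V B G → B.card ≤ d)
    (S : Finset H) (i : ℕ) (hne : ∀ j < i, VS.V (Gseq VS S j) ≠ ∅) :
    (S ∩ bOf VS (Gseq VS S i)).card + i ≤ d := by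
  classical
  set B := bOf VS (Gseq VS S i) with hBdef
  have hcard : B.card ≤ d := hd _ _ (bOf_basis VS _)
  have hsub : (range i).biUnion (fun j => B ∩ VS.V (Gseq VS S j)) ⊆ B \ S := by
    intro x hx
    obtain ⟨j, hj, hxj⟩ := mem_biUnion.mp hx
    rw [mem_inter] at hxj
    refine mem_sdiff.mpr ⟨hxj.1, fun hxS => ?_⟩
    exact (disjoint_left.mp (VS.consistency (Gseq VS S j)) (subset_gseq VS S j hxS)) hxj.2
  have hdisj : ∀ j ∈ range i, ∀ j' ∈ range i, j ≠ j' →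
      Disjoint (B ∩ VS.V (Gseq VS S j)) (B ∩ VS.V (Gseq VS S j')) := by
    intro j _ j' _ hne'
    rcases hne'.lt_or_gt with h | h
    · exact Disjoint.mono inter_subset_right inter_subset_right (v_gseq_disjoint VS S h)
    · exact (Disjoint.mono inter_subset_right inter_subset_right (v_gseq_disjoint VS S h)).symm
  have hone : ∀ j ∈ range i, 1 ≤ (B ∩ VS.V (Gseq VS S j)).card := by
    intro j hj
    obtain ⟨x, hx1, hx2⟩ := basis_meets VS S (mem_range.mp hj) (hne j (mem_range.mp hj))
    exact card_pos.mpr ⟨x, mem_inter.mpr ⟨hx1, hx2⟩⟩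
  have h1 : i ≤ ((range i).biUnion (fun j => B ∩ VS.V (Gseq VS S j))).card := by
    rw [card_biUnion hdisj]
    calc i = ∑ _j ∈ range i, 1 := by simp
    _ ≤ _ := Finset.sum_le_sum hone
  have h2 : i ≤ (B \ S).card := h1.trans (card_le_card hsub)
  have h3 : (B ∩ S).card + (B \ S).card = B.card := card_inter_add_card_sdiff B S
  rw [inter_comm]
  omega

lemma card_inter_biUnion_le (s : Finset H) (t : Finset ℕ) (f : ℕ → Finset H) :
    (s ∩ t.biUnion f).card ≤ ∑ i ∈ t, (s ∩ f i).card := by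
  classical
  have h : s ∩ t.biUnion f = t.biUnion (fun i => s ∩ f i) := by
    ext x
    simp only [mem_inter, mem_biUnion]
    tauto
  rw [h]
  exact card_biUnion_le

/-- The master comparison lemma: if each round set of `C` admits a set with the
same violators contained in `A` together with earlier violator sets of `C`,
then the first `n` violator sets of `A` and `C` coincide. -/
lemma gen (A C : Finset H) (hAC : A ⊆ C) (n : ℕ)
    (hW : ∀ j < n, ∃ W, VS.V W = VS.V (Gseq VS C j) ∧
      W ⊆ A ∪ (range j).biUnion (fun j' => VS.V (Gseq VS C j'))) :
    ∀ j < n, VS.V (Gseq VS A j) = VS.V (Gseq VS C j) := by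
  intro j
  induction j using Nat.strong_induction_on with
  | _ j IH =>
    intro hj
    have hGA : Gseq VS A j = A ∪ (range j).biUnion (fun j' => VS.V (Gseq VS C j')) := by
      rw [gseq_eq]
      congr 1
      refine biUnion_congr rfl ?_
      intro j' hj'
      exact IH j' (mem_range.mp hj') ((mem_range.mp hj').trans hj)
    have hsub : Gseq VS A j ⊆ Gseq VS C j := by
      rw [hGA, gseq_eq VS C j]
      exact union_subset_union hAC (Subset.refl _)
    obtain ⟨W, hWV, hWsub⟩ := hW j hj
    exact VS_sandwich VS (by rw [hGA]; exact hWsub) hsub hWV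

lemma sum_range_sub_eq_choose (d : ℕ) : ∑ i ∈ range d, (d - i) = (d + 1).choose 2 := by
  have h1 : ∑ i ∈ range d, (d - i) = ∑ i ∈ range d, (i + 1) := by
    rw [← Finset.sum_range_reflect (fun i => i + 1) d]
    refine Finset.sum_congr rfl ?_
    intro i hi
    have := mem_range.mp hi
    omega
  rw [h1]
  clear h1
  induction d with
  | zero => simp
  | succ d ih =>
    rw [Finset.sum_range_succ, ih]
    have : (d + 2).choose 2 = (d + 1).choose 1 + (d + 1).choose 2 := Nat.choose_succ_succ _ _
    rw [this, Nat.choose_one_right]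
    omega

/-- Main reduction: every set `S` contains a subset `T` of size at most
`(d+1 choose 2)` with the same `Vprime`. -/
lemma reduce (d : ℕ) (hd : ∀ G B : Finset H, IsBasisOf VS.V B G → B.card ≤ d)
    (S : Finset H) :
    ∃ T, T ⊆ S ∧ Vprime VS d T = Vprime VS d S ∧ T.card ≤ (d + 1).choose 2 := by
  classical
  set T := S ∩ (range d).biUnion (fun i => bOf VS (Gseq VS S i)) with hTdef
  have hTS : T ⊆ S := inter_subset_left
  have hBsubT : ∀ i < d, S ∩ bOf VS (Gseq VS S i) ⊆ T := by
    intro i hi x hx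
    rw [mem_inter] at hx
    rw [hTdef, mem_inter]
    exact ⟨hx.1, mem_biUnion.mpr ⟨i, mem_range.mpr hi, hx.2⟩⟩
  have key1 : ∀ U, T ⊆ U → U ⊆ S → ∀ i < d, VS.V (Gseq VS U i) = VS.V (Gseq VS S i) := by
    intro U hTU hUS
    refine gen VS U S hUS d ?_
    intro j hj
    refine ⟨bOf VS (Gseq VS S j), (bOf_basis VS _).2.1, ?_⟩
    intro x hx
    have hxG : x ∈ Gseq VS S j := (bOf_basis VS _).1 hx
    rw [gseq_eq] at hxG
    rcases mem_union.mp hxG with hxS | hxB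
    · exact mem_union_left _ (hTU (hBsubT j hj (mem_inter.mpr ⟨hxS, hx⟩)))
    · exact mem_union_right _ hxB
  have key2 : ∀ (h : H) (n : ℕ), n ≤ d →
      (∀ j < n, VS.V (Gseq VS (insert h S) j) = VS.V (Gseq VS S j)) →
      ∀ j < n, VS.V (Gseq VS (insert h T) j) = VS.V (Gseq VS (insert h S) j) := by
    intro h n hn hpre
    refine gen VS (insert h T) (insert h S) (insert_subset_insert h hTS) n ?_
    intro j hj
    refine ⟨bOf VS (Gseq VS S j), ?_, ?_⟩
    · rw [(bOf_basis VS _).2.1, hpre j hj]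
    · intro x hx
      have hxG : x ∈ Gseq VS S j := (bOf_basis VS _).1 hx
      rw [gseq_eq] at hxG
      rcases mem_union.mp hxG with hxS | hxB
      · exact mem_union_left _
          (mem_insert_of_mem (hBsubT j (lt_of_lt_of_le hj hn) (mem_inter.mpr ⟨hxS, hx⟩)))
      · obtain ⟨j', hj', hxj'⟩ := mem_biUnion.mp hxB
        refine mem_union_right _ (mem_biUnion.mpr ⟨j', hj', ?_⟩)
        rw [hpre j' ((mem_range.mp hj').trans hj)]
        exact hxj'
  refine ⟨T, hTS, ?_, ?_⟩
  · -- Vprime equality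
    ext h
    simp only [Vprime, mem_filter, mem_univ, true_and, mem_range]
    constructor
    · rintro ⟨hhT, i, hi, hne⟩
      have hhS : h ∉ S := by
        intro hhS
        apply hne
        rw [key1 T (Subset.refl T) hTS i hi,
          key1 (insert h T) (subset_insert h T) (insert_subset hhS hTS) i hi]
      refine ⟨hhS, ?_⟩
      by_contra hall
      push_neg at hall
      have hall' : ∀ j < d, VS.V (Gseq VS (insert h S) j) = VS.V (Gseq VS S j) := by
        intro j hj
        exact (hall j hj).symm
      have := key2 h d le_rfl hall' i hi
      apply hne
      rw [key1 T (Subset.refl T) hTS i hi, this, hall' i hi]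
    · rintro ⟨hhS, i, hi, hne⟩
      refine ⟨fun hhT => hhS (hTS hhT), ?_⟩
      by_contra hall
      push_neg at hall
      have hall' : ∀ j < d, VS.V (Gseq VS T j) = VS.V (Gseq VS (insert h T) j) := by
        intro j hj
        exact hall j hj
      -- Claim D: the violator sequence of `S` is unchanged by inserting `h`.
      have hD : ∀ i', i' < d → VS.V (Gseq VS (insert h S) i') = VS.V (Gseq VS S i') := by
        intro i'
        induction i' using Nat.strong_induction_on with
        | _ i' IH =>
          intro hi'
          have hpre : ∀ j < i', VS.V (Gseq VS (insert h S) j) = VS.V (Gseq VS S j) :=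
            fun j hj => IH j hj (hj.trans hi')
          by_cases hhV : h ∈ VS.V (Gseq VS S i')
          · exfalso
            have e1 : VS.V (Gseq VS T i') = VS.V (Gseq VS S i') :=
              key1 T (Subset.refl T) hTS i' hi'
            have e2 : VS.V (Gseq VS (insert h T) i') = VS.V (Gseq VS T i') :=
              (hall' i' hi').symm
            have hhVT : h ∈ VS.V (Gseq VS (insert h T) i') := by
              rw [e2, e1]; exact hhV
            have hhG : h ∈ Gseq VS (insert h T) i' :=
              subset_gseq VS (insert h T) i' (mem_insert_self h T)
            exact (disjoint_left.mp (VS.consistency _) hhG) hhVT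
          · have hGeq : Gseq VS (insert h S) i' = insert h (Gseq VS S i') := by
              rw [gseq_eq, gseq_eq VS S i']
              rw [biUnion_congr rfl (fun j hj => by rw [hpre j (mem_range.mp hj)])]
              rw [insert_union]
            rw [hGeq]
            refine VS.locality _ _ (subset_insert _ _) ?_
            rw [disjoint_insert_left]
            exact ⟨hhV, VS.consistency _⟩
      exact hne (hD i hi).symm
  · -- cardinality bound
    by_cases hP : ∃ k, VS.V (Gseq VS S k) = ∅ ∧ k < d
    · have hP' : ∃ k, VS.V (Gseq VS S k) = ∅ := ⟨hP.choose, hP.choose_spec.1⟩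
      set k := Nat.find hP' with hkdef
      have hk : VS.V (Gseq VS S k) = ∅ := Nat.find_spec hP'
      have hkd : k < d := lt_of_le_of_lt (Nat.find_min' hP' hP.choose_spec.1) hP.choose_spec.2
      have hcollapse : T ⊆ S ∩ (range (k+1)).biUnion (fun i => bOf VS (Gseq VS S i)) := by
        intro x hx
        rw [hTdef, mem_inter] at hx
        obtain ⟨i, hi, hxi⟩ := mem_biUnion.mp hx.2
        rw [mem_inter]
        refine ⟨hx.1, ?_⟩
        rcases Nat.lt_or_ge i (k+1) with h | h
        · exact mem_biUnion.mpr ⟨i, mem_range.mpr h, hxi⟩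
        · have : Gseq VS S i = Gseq VS S k := gseq_stab VS S hk i (by omega)
          rw [this] at hxi
          exact mem_biUnion.mpr ⟨k, mem_range.mpr (Nat.lt_succ_self k), hxi⟩
      calc T.card ≤ (S ∩ (range (k+1)).biUnion (fun i => bOf VS (Gseq VS S i))).card :=
            card_le_card hcollapse
        _ ≤ ∑ i ∈ range (k+1), (S ∩ bOf VS (Gseq VS S i)).card :=
            card_inter_biUnion_le S _ _
        _ ≤ ∑ i ∈ range (k+1), (d - i) := by
            refine Finset.sum_le_sum ?_
            intro i hi
            have hik : i ≤ k := Nat.lt_succ_iff.mp (mem_range.mp hi)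
            have hnem : ∀ j < i, VS.V (Gseq VS S j) ≠ ∅ := by
              intro j hj
              exact Nat.find_min hP' (by omega)
            have := card_inter_le VS d hd S i hnem
            omega
        _ ≤ ∑ i ∈ range d, (d - i) := by
            refine Finset.sum_le_sum_of_subset (range_subset_range.mpr (by omega))
        _ = (d + 1).choose 2 := sum_range_sub_eq_choose d
    · push_neg at hP
      calc T.card ≤ ∑ i ∈ range d, (S ∩ bOf VS (Gseq VS S i)).card :=
            card_inter_biUnion_le S _ _
        _ ≤ ∑ i ∈ range d, (d - i) := by
            refine Finset.sum_le_sum ?_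
            intro i hi
            have hid : i < d := mem_range.mp hi
            have hnem : ∀ j < i, VS.V (Gseq VS S j) ≠ ∅ := fun j hj hemp =>
              absurd (hP j hemp) (not_le.mpr (hj.trans hid))
            have := card_inter_le VS d hd S i hnem
            omega
        _ = (d + 1).choose 2 := sum_range_sub_eq_choose d

end Aux

/-- **Lemma 4 (i), second part.** The derived violator space `(H, V')` has
combinatorial dimension at most `(d + 1 choose 2)`, where `d` is the
combinatorial dimension of `(H, V)`. -/
theorem Vprime_dim_bound {H : Type*} [Fintype H] [DecidableEq H]
    (VS : ViolatorSpace H) (d : ℕ)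
    (hd : ∀ G B : Finset H, IsBasisOf VS.V B G → B.card ≤ d) :
    ∀ R B : Finset H, IsBasisOf (Vprime VS d) B R → B.card ≤ (d + 1).choose 2 := by
  intro R B hB
  obtain ⟨hBR, hVBR, hmin⟩ := hB
  obtain ⟨T, hTB, hVT, hTcard⟩ := reduce VS d hd B
  rcases eq_or_ne T B with rfl | hne
  · exact hTcard
  · exact absurd (hVT.trans hVBR) (hmin T (ssubset_of_subset_of_ne hTB hne))
end

section
/- Auxiliary claim for the German Algorithm: let Q = R ⊔ T ⊆ H (disjoint union) and i < d. If V_Q^(j+1) = V_R^(j+1) for all j ≤ i, then G_Q^(j) = G_R^(j) ⊔ T for all j ≤ i+1. -/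
open Finset

/-- **Claim 1.** Let `Q = R ⊔ T ⊆ H` (disjoint union) and `i < d`. If
`V_Q⁽ʲ⁺¹⁾ = V_R⁽ʲ⁺¹⁾` for all `j ≤ i` (where `V_S⁽ʲ⁺¹⁾ = V(G_S⁽ʲ⁾)`), then
`G_Q⁽ʲ⁾ = G_R⁽ʲ⁾ ⊔ T` for all `j ≤ i + 1`. -/
theorem german_claim_disjoint_union {H : Type*} [Fintype H] [DecidableEq H]
    (VS : ViolatorSpace H) (d : ℕ) (R T Q : Finset H)
    (hdisj : Disjoint R T) (hQ : Q = R ∪ T) (i : ℕ) (hi : i < d)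
    (hV : ∀ j ≤ i, VS.V (Gseq VS Q j) = VS.V (Gseq VS R j)) :
    ∀ j ≤ i + 1, Gseq VS Q j = Gseq VS R j ∪ T ∧ Disjoint (Gseq VS R j) T := by
  intro j
  induction j with
  | zero => intro _; exact ⟨hQ, hdisj⟩
  | succ k ih =>
    intro hk
    have hk' : k ≤ i := Nat.lt_succ_iff.mp (Nat.lt_of_lt_of_le (Nat.lt_succ_self k) hk)
    obtain ⟨hG, hD⟩ := ih (le_trans hk' (Nat.le_succ i))
    have hVk := hV k hk'
    have hcons := VS.consistency (Gseq VS Q k)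
    rw [hVk, hG] at hcons
    have hTV : Disjoint T (VS.V (Gseq VS R k)) :=
      (Finset.disjoint_union_left.mp hcons).2
    constructor
    · show Gseq VS Q k ∪ VS.V (Gseq VS Q k) = (Gseq VS R k ∪ VS.V (Gseq VS R k)) ∪ T
      rw [hVk, hG]
      ac_rfl
    · show Disjoint (Gseq VS R k ∪ VS.V (Gseq VS R k)) T
      exact Finset.disjoint_union_left.mpr ⟨hD, hTV.symm⟩
end

section
/- In any violator space (H, V), every G ⊆ H has a unique anti-basis: there is a unique maximal superset B̄ ⊇ G with V(B̄) = V(G), and for all proper supersets F ⊃ B̄ one has V(B̄) ∩ F ≠ ∅. -/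
open Finset

/-- In any violator space `(H, V)`, every `G ⊆ H` has a unique anti-basis: a
unique maximal superset `B̄ ⊇ G` with `V(B̄) = V(G)`; moreover every proper
superset `F ⊃ B̄` satisfies `V(B̄) ∩ F ≠ ∅`. -/
theorem unique_anti_basis {H : Type*} [Fintype H] [DecidableEq H]
    (VS : ViolatorSpace H) (G : Finset H) :
    ∃! Bbar : Finset H,
      (G ⊆ Bbar ∧ VS.V Bbar = VS.V G ∧
        ∀ F : Finset H, Bbar ⊆ F → VS.V F = VS.V G → F = Bbar) ∧
      (∀ F : Finset H, Bbar ⊂ F → (VS.V Bbar ∩ F).Nonempty) := by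
  set B : Finset H := (VS.V G)ᶜ with hB
  have hsub : G ⊆ B := by
    intro x hx
    simp only [hB, mem_compl]
    exact fun h => (VS.consistency G).forall_ne_finset hx h rfl
  have hdisj : Disjoint B (VS.V G) := disjoint_compl_left
  have hVB : VS.V B = VS.V G := VS.locality G B hsub hdisj
  have hmax : ∀ F : Finset H, B ⊆ F → VS.V F = VS.V G → F = B := by
    intro F hBF hVF
    refine subset_antisymm ?_ hBF
    intro x hxF
    simp only [hB, mem_compl]
    rw [← hVF]
    exact fun h => (VS.consistency F).forall_ne_finset hxF h rfl
  refine ⟨B, ⟨⟨hsub, hVB, hmax⟩, ?_⟩, ?_⟩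
  · intro F hBF
    obtain ⟨x, hxF, hxB⟩ := exists_of_ssubset hBF
    refine ⟨x, mem_inter.mpr ⟨?_, hxF⟩⟩
    rw [hVB]
    simpa [hB] using hxB
  · rintro B' ⟨⟨hsub', hVB', hmax'⟩, -⟩
    have hB'B : B' ⊆ B := by
      intro x hx
      simp only [hB, mem_compl]
      rw [← hVB']
      exact fun h => (VS.consistency B').forall_ne_finset hx h rfl
    exact (hmax' B hB'B hVB).symm
end
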